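/- Suppose d and d' are divisors of q-1, and (γ^((q-1)/d), b, H) and (γ^((q-1)/d'), b', H') are triples in S such that S(γ^((q-1)/d), b, H) = S(γ^((q-1)/d'), b', H') as subgroups of AGL(1,F_q). Then d = d', H = H', and b - b' ∈ H. -/

import Mathlib

open Matrix
open scoped Classical

abbrev GL2 (F : Type) [Field F] := GL (Fin 2) F

/-- `AGL(1,F)`: the subgroup of `GL(2,F)` of matrices of the form `[[a,b],[0,1]]`. -/
def AGL (F : Type) [Field F] : Subgroup (GL2 F) where
  carrier := {g | (g : Matrix (Fin 2) (Fin 2) F) 1 0 = 0 ∧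
                  (g : Matrix (Fin 2) (Fin 2) F) 1 1 = 1}
  one_mem' := by
    constructor <;> simp [Matrix.one_apply]
  mul_mem' := by
    rintro a b ⟨ha0, ha1⟩ ⟨hb0, hb1⟩
    constructor <;>
      simp [Units.val_mul, Matrix.mul_apply, Fin.sum_univ_two, ha0, ha1, hb0, hb1]
  inv_mem' := by
    rintro g ⟨h0, h1⟩
    have hdet : ((g : Matrix (Fin 2) (Fin 2) F) 0 0) ≠ 0 := by
      have hu : IsUnit ((g : Matrix (Fin 2) (Fin 2) F).det) :=
        (Matrix.isUnit_iff_isUnit_det _).1 g.isUnit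
      rw [Matrix.det_fin_two, h0, h1] at hu
      simpa using hu.ne_zero
    have hinv : ((g⁻¹ : GL2 F) : Matrix (Fin 2) (Fin 2) F)
        = ((g : Matrix (Fin 2) (Fin 2) F))⁻¹ := Matrix.coe_units_inv g
    constructor <;>
      simp [hinv, Matrix.inv_def, Matrix.adjugate_fin_two, Matrix.det_fin_two,
        h0, h1, hdet]

/-- Membership of a triple `(a,b,H)` in the set `𝒮`: `a ∈ F*`, `H` is an additive
subgroup of `F` closed under multiplication by the subfield `F_p(a)` generated by `a`,
and `b = 0` when `a = 1`. -/
def memS {F : Type} [Field F] (a b : F) (H : AddSubgroup F) : Prop :=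
  a ≠ 0 ∧ (a = 1 → b = 0) ∧ ∀ x ∈ Subfield.closure {a}, ∀ h ∈ H, x * h ∈ H

/-- `S(a,b,H)`: the subgroup of `GL(2,F)` generated by the matrix `[[a,b],[0,1]]`
together with the matrices `[[1,h],[0,1]]`, `h ∈ H`. -/
def Sgrp {F : Type} [Field F] (a b : F) (H : AddSubgroup F) : Subgroup (GL2 F) :=
  Subgroup.closure {g : GL2 F |
    (g : Matrix (Fin 2) (Fin 2) F) = !![a, b; 0, 1] ∨
    ∃ h ∈ H, (g : Matrix (Fin 2) (Fin 2) F) = !![1, h; 0, 1]}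

/-- `pPow p d` is `p(d)`: the smallest (positive) power of `p` that is `≡ 1 (mod d)`. -/
noncomputable def pPow (p d : ℕ) : ℕ := sInf {m | (∃ k : ℕ, 1 ≤ k ∧ m = p ^ k) ∧ m % d = 1 % d}

namespace Stmt7Aux

variable {F : Type} [Field F]

lemma geom_mul_b_eq_zero {a b : F} (hb : a = 1 → b = 0) {k : ℕ} (hk : a ^ k = 1) :
    (∑ i ∈ Finset.range k, a ^ i) * b = 0 := by
  by_cases h1 : a = 1
  · simp [hb h1]
  · have h := geom_sum_mul a k
    rw [hk, sub_self] at h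
    have hz : (∑ i ∈ Finset.range k, a ^ i) = 0 :=
      (mul_eq_zero.1 h).resolve_right (sub_ne_zero.2 h1)
    simp [hz]

lemma geom_sum_range_add (a : F) (k j : ℕ) :
    (∑ i ∈ Finset.range (k + j), a ^ i)
      = (∑ i ∈ Finset.range k, a ^ i) + a ^ k * ∑ i ∈ Finset.range j, a ^ i := by
  rw [Finset.sum_range_add, Finset.mul_sum]
  simp [pow_add]

lemma exists_pow_inv [Fintype F] {a : F} (ha : a ≠ 0) (k : ℕ) : ∃ m : ℕ, a ^ (k + m) = 1 := by
  have han : a ^ (orderOf (Units.mk0 a ha)) = 1 := by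
    have := congrArg Units.val (pow_orderOf_eq_one (Units.mk0 a ha))
    rw [Units.val_pow_eq_pow_val, Units.val_mk0, Units.val_one] at this
    exact this
  obtain ⟨n', hn⟩ : ∃ n', orderOf (Units.mk0 a ha) = n' + 1 :=
    ⟨orderOf (Units.mk0 a ha) - 1, by have := orderOf_pos (Units.mk0 a ha); omega⟩
  refine ⟨k * n', ?_⟩
  have harith : k + k * n' = (n' + 1) * k := by ring
  rw [harith, pow_mul, ← hn, han, one_pow]

def upper (x t : F) (hx : x ≠ 0) : GL2 F where
  val := !![x, t; 0, 1]
  inv := !![x⁻¹, -(x⁻¹ * t); 0, 1]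
  val_inv := by
    rw [Matrix.mul_fin_two]
    ext i j
    fin_cases i <;> fin_cases j <;>
      simp [Matrix.one_fin_two, mul_inv_cancel₀ hx, ← mul_assoc]
  inv_val := by
    rw [Matrix.mul_fin_two]
    ext i j
    fin_cases i <;> fin_cases j <;>
      simp [Matrix.one_fin_two, inv_mul_cancel₀ hx, ← mul_assoc]

@[simp] lemma upper_val (x t : F) (hx : x ≠ 0) :
    ((upper x t hx : GL2 F) : Matrix (Fin 2) (Fin 2) F) = !![x, t; 0, 1] := rfl

lemma upper_mul (x t y s : F) (hx : x ≠ 0) (hy : y ≠ 0) :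
    upper x t hx * upper y s hy = upper (x * y) (x * s + t) (mul_ne_zero hx hy) := by
  apply Units.ext
  rw [Units.val_mul, upper_val, upper_val, upper_val, Matrix.mul_fin_two]
  ext i j
  fin_cases i <;> fin_cases j <;> simp

lemma upper_pow (a b : F) (ha : a ≠ 0) (k : ℕ) :
    upper a b ha ^ k
      = upper (a ^ k) ((∑ i ∈ Finset.range k, a ^ i) * b) (pow_ne_zero k ha) := by
  induction k with
  | zero =>
    apply Units.ext
    simp [Matrix.one_fin_two]
  | succ k ih =>
    rw [pow_succ, ih, upper_mul]
    apply Units.ext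
    rw [upper_val, upper_val]
    ext i j
    fin_cases i <;> fin_cases j <;>
      simp [Finset.sum_range_succ, pow_succ, add_mul] <;> ring




set_option maxHeartbeats 1000000 in
lemma mem_Sgrp_iff {F : Type} [Field F] [Fintype F] {a b : F} {H : AddSubgroup F}
    (hm : memS a b H) (g : GL2 F) :
    g ∈ Sgrp a b H ↔ ∃ k : ℕ, ∃ h ∈ H,
      (g : Matrix (Fin 2) (Fin 2) F)
        = !![a ^ k, (∑ i ∈ Finset.range k, a ^ i) * b + h; 0, 1] := by
  obtain ⟨ha, hb, hH⟩ := hm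
  have hcl : ∀ m : ℕ, a ^ m ∈ Subfield.closure ({a} : Set F) := fun m =>
    pow_mem (Subfield.subset_closure (Set.mem_singleton a)) m
  let K : Subgroup (GL2 F) :=
    { carrier := {g : GL2 F | ∃ k : ℕ, ∃ h ∈ H,
        (g : Matrix (Fin 2) (Fin 2) F)
          = !![a ^ k, (∑ i ∈ Finset.range k, a ^ i) * b + h; 0, 1]}
      one_mem' := ⟨0, 0, H.zero_mem, by simp [Matrix.one_fin_two]⟩
      mul_mem' := by
        rintro g1 g2 ⟨k, h, hh, hg1⟩ ⟨j, h2, hh2, hg2⟩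
        refine ⟨k + j, a ^ k * h2 + h, H.add_mem (hH _ (hcl k) _ hh2) hh, ?_⟩
        rw [Units.val_mul, hg1, hg2, Matrix.mul_fin_two]
        ext i j'
        fin_cases i <;> fin_cases j' <;>
          simp [pow_add, geom_sum_range_add] <;> ring
      inv_mem' := by
        rintro g ⟨k, h, hh, hg⟩
        obtain ⟨m, hkm⟩ := exists_pow_inv ha k
        have h1 : a ^ k * a ^ m = 1 := by rw [← pow_add]; exact hkm
        have h2 : (a ^ k)⁻¹ = a ^ m := inv_eq_of_mul_eq_one_right h1
        have h0 : (∑ i ∈ Finset.range (k + m), a ^ i) * b = 0 :=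
          geom_mul_b_eq_zero hb hkm
        rw [geom_sum_range_add] at h0
        have h0' : a ^ m * ((∑ i ∈ Finset.range k, a ^ i) * b)
            + (a ^ m * a ^ k) * ((∑ i ∈ Finset.range m, a ^ i) * b) = 0 := by
          linear_combination a ^ m * h0
        rw [mul_comm (a ^ m) (a ^ k), h1, one_mul] at h0'
        refine ⟨m, -(a ^ m * h), neg_mem (hH _ (hcl m) _ hh), ?_⟩
        have hco : ((g⁻¹ : GL2 F) : Matrix (Fin 2) (Fin 2) F)
            = ((g : Matrix (Fin 2) (Fin 2) F))⁻¹ := Matrix.coe_units_inv g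
        rw [hco, hg, Matrix.inv_def, Matrix.adjugate_fin_two, Matrix.det_fin_two]
        ext i j
        fin_cases i <;> fin_cases j <;>
          simp [h2] <;> first
            | linear_combination h1
            | linear_combination -h1
            | linear_combination h0'
            | linear_combination -h0'
            | linear_combination h1 - h0'
            | linear_combination h1 + h0'
            | linear_combination -h1 - h0'
      }
  constructor
  · intro hg
    refine (Subgroup.closure_le K).2 ?_ hg
    rintro g (hg1 | ⟨h, hh, hg1⟩)
    · exact ⟨1, 0, H.zero_mem, by simp [hg1]⟩
    · exact ⟨0, h, hh, by simp [hg1]⟩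
  · rintro ⟨k, h, hh, hg⟩
    have hA : upper a b ha ∈ Sgrp a b H := Subgroup.subset_closure (Or.inl rfl)
    obtain ⟨m, hkm⟩ := exists_pow_inv ha k
    have h1 : a ^ k * a ^ m = 1 := by rw [← pow_add]; exact hkm
    have hU : upper 1 (a ^ m * h) one_ne_zero ∈ Sgrp a b H :=
      Subgroup.subset_closure (Or.inr ⟨a ^ m * h, hH _ (hcl m) _ hh, rfl⟩)
    have hgeq : g = upper a b ha ^ k * upper 1 (a ^ m * h) one_ne_zero := by
      apply Units.ext
      rw [upper_pow, upper_mul, hg, upper_val]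
      ext i j
      fin_cases i <;> fin_cases j <;> simp [← mul_assoc, h1] <;> ring
    rw [hgeq]
    exact mul_mem (pow_mem hA k) hU

end Stmt7Aux


open Stmt7Aux in
/-- Uniqueness: if `S(γ^((q-1)/d), b, H) = S(γ^((q-1)/d'), b', H')` for triples in `𝒮`,
then `d = d'`, `H = H'`, and `b ≡ b' (mod H)`. -/
theorem stmt7 (F : Type) [Field F] [Fintype F] (q : ℕ) (hq : Fintype.card F = q)
    (γ : F) (hγ0 : γ ≠ 0) (hγ : ∀ x : F, x ≠ 0 → ∃ k : ℕ, x = γ ^ k)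
    (d d' : ℕ) (hd : d ∣ q - 1) (hd' : d' ∣ q - 1)
    (b b' : F) (H H' : AddSubgroup F)
    (hS : memS (γ ^ ((q - 1) / d)) b H) (hS' : memS (γ ^ ((q - 1) / d')) b' H')
    (heq : Sgrp (γ ^ ((q - 1) / d)) b H = Sgrp (γ ^ ((q - 1) / d')) b' H') :
    d = d' ∧ H = H' ∧ b - b' ∈ H := by
  have hq2 : 1 < q := hq ▸ Fintype.one_lt_card
  have hq1 : q - 1 ≠ 0 := by omega
  have hordu : orderOf (Units.mk0 γ hγ0) = q - 1 := by
    have h1 : ∀ v : Fˣ, v ∈ Subgroup.zpowers (Units.mk0 γ hγ0) := by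
      intro v
      obtain ⟨k, hk⟩ := hγ v.val v.ne_zero
      refine Subgroup.mem_zpowers_iff.2 ⟨(k : ℤ), ?_⟩
      apply Units.ext
      rw [zpow_natCast]
      simp [Units.val_pow_eq_pow_val, ← hk]
    have h2 := orderOf_eq_card_of_forall_mem_zpowers h1
    rw [Nat.card_eq_fintype_card, Fintype.card_units, hq] at h2
    exact h2
  have horder : ∀ e : ℕ, e ∣ q - 1 → e ≠ 0 → orderOf (γ ^ ((q - 1) / e)) = e := by
    intro e he he0
    have hval : γ ^ ((q - 1) / e) = ((Units.mk0 γ hγ0 ^ ((q - 1) / e) : Fˣ) : F) := by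
      rw [Units.val_pow_eq_pow_val]
      simp
    rw [hval, orderOf_units, orderOf_pow, hordu,
      Nat.gcd_eq_right (Nat.div_dvd_of_dvd he), Nat.div_div_self he hq1]
  have hd0 : d ≠ 0 := by rintro rfl; exact hq1 (Nat.eq_zero_of_zero_dvd hd)
  have hd'0 : d' ≠ 0 := by rintro rfl; exact hq1 (Nat.eq_zero_of_zero_dvd hd')
  -- membership of the generator of the primed group in the unprimed group
  have hAmem : upper (γ ^ ((q - 1) / d')) b' (pow_ne_zero _ hγ0)
      ∈ Sgrp (γ ^ ((q - 1) / d)) b H := by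
    rw [heq]; exact Subgroup.subset_closure (Or.inl rfl)
  obtain ⟨k, h, hh, hmat⟩ := (mem_Sgrp_iff hS _).1 hAmem
  rw [upper_val] at hmat
  have h00 : γ ^ ((q - 1) / d') = (γ ^ ((q - 1) / d)) ^ k := by
    simpa using congrFun (congrFun hmat 0) 0
  have h01 : b' = (∑ i ∈ Finset.range k, (γ ^ ((q - 1) / d)) ^ i) * b + h := by
    simpa using congrFun (congrFun hmat 0) 1
  have hA'mem : upper (γ ^ ((q - 1) / d)) b (pow_ne_zero _ hγ0)
      ∈ Sgrp (γ ^ ((q - 1) / d')) b' H' := by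
    rw [← heq]; exact Subgroup.subset_closure (Or.inl rfl)
  obtain ⟨k', h2, hh2, hmat'⟩ := (mem_Sgrp_iff hS' _).1 hA'mem
  rw [upper_val] at hmat'
  have h00' : γ ^ ((q - 1) / d) = (γ ^ ((q - 1) / d')) ^ k' := by
    simpa using congrFun (congrFun hmat' 0) 0
  have hdvd1 : d' ∣ d := by
    rw [← horder d hd hd0, ← horder d' hd' hd'0]
    apply orderOf_dvd_of_pow_eq_one
    rw [h00, ← pow_mul, mul_comm, pow_mul, pow_orderOf_eq_one, one_pow]
  have hdvd2 : d ∣ d' := by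
    rw [← horder d hd hd0, ← horder d' hd' hd'0]
    apply orderOf_dvd_of_pow_eq_one
    rw [h00', ← pow_mul, mul_comm, pow_mul, pow_orderOf_eq_one, one_pow]
  have hdd : d = d' := Nat.dvd_antisymm hdvd2 hdvd1
  subst hdd
  refine ⟨rfl, ?_, ?_⟩
  · -- H = H'
    apply le_antisymm
    · intro x hx
      have hU : upper 1 x one_ne_zero ∈ Sgrp (γ ^ ((q - 1) / d)) b' H' := by
        rw [← heq]; exact Subgroup.subset_closure (Or.inr ⟨x, hx, rfl⟩)
      obtain ⟨j, y, hy, hm⟩ := (mem_Sgrp_iff hS' _).1 hU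
      rw [upper_val] at hm
      have e0 : (γ ^ ((q - 1) / d)) ^ j = 1 := by
        simpa using (congrFun (congrFun hm 0) 0).symm
      have e1 : x = (∑ i ∈ Finset.range j, (γ ^ ((q - 1) / d)) ^ i) * b' + y := by
        simpa using congrFun (congrFun hm 0) 1
      rw [geom_mul_b_eq_zero hS'.2.1 e0, zero_add] at e1
      exact e1 ▸ hy
    · intro x hx
      have hU : upper 1 x one_ne_zero ∈ Sgrp (γ ^ ((q - 1) / d)) b H := by
        rw [heq]; exact Subgroup.subset_closure (Or.inr ⟨x, hx, rfl⟩)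
      obtain ⟨j, y, hy, hm⟩ := (mem_Sgrp_iff hS _).1 hU
      rw [upper_val] at hm
      have e0 : (γ ^ ((q - 1) / d)) ^ j = 1 := by
        simpa using (congrFun (congrFun hm 0) 0).symm
      have e1 : x = (∑ i ∈ Finset.range j, (γ ^ ((q - 1) / d)) ^ i) * b + y := by
        simpa using congrFun (congrFun hm 0) 1
      rw [geom_mul_b_eq_zero hS.2.1 e0, zero_add] at e1
      exact e1 ▸ hy
  · -- b - b' ∈ H
    by_cases hone : γ ^ ((q - 1) / d) = 1
    · rw [hS.2.1 hone, hS'.2.1 hone, sub_zero]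
      exact H.zero_mem
    · have hs : (∑ i ∈ Finset.range k, (γ ^ ((q - 1) / d)) ^ i) = 1 := by
        have hg := geom_sum_mul (γ ^ ((q - 1) / d)) k
        rw [← h00] at hg
        have hne : γ ^ ((q - 1) / d) - 1 ≠ 0 := sub_ne_zero.2 hone
        field_simp at hg
        exact mul_right_cancel₀ hne (by rw [hg])
      rw [hs, one_mul] at h01
      have : b - b' = -h := by rw [h01]; ring
      rw [this]
      exact neg_mem hh
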